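/- Every equivalence class of the congruence ~_S on the type B_n Tamari lattice contains exactly one element of T_n^S (the bracket vectors with no entry n-1 in a position from S), and it is the maximum element of its class; consequently the order induced on T_n^S as a quotient of the B_n Tamari lattice coincides with the order induced by inclusion in the B_n Tamari lattice, and is a lattice. -/

import Mathlib

/-- Condition (i) for type `B_n` bracket vectors: for `i < j` (0-based),
if `r_j - (j-i)` is a nonnegative integer then `r_i ≤ r_j - (j-i)`
(equivalently `r_i + (j-i) ≤ r_j`; when `r_j = ∞` this holds trivially,
matching the convention that `∞` minus an integer is `∞`). -/
def condIB (n : ℕ) (r : Fin n → ℕ∞) : Prop :=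
  ∀ i j : Fin n, i < j → (((j : ℕ) - (i : ℕ) : ℕ) : ℕ∞) ≤ r j →
    r i + (((j : ℕ) - (i : ℕ) : ℕ) : ℕ∞) ≤ r j

/-- Condition (ii) for type `B_n` bracket vectors: if `∞ > r_i ≥ i`
(1-based; here `i = k+1` for the 0-based index `k`) then `r_{n+i-r_i} = ∞`. -/
def condIIB (n : ℕ) (r : Fin n → ℕ∞) : Prop :=
  ∀ (k : Fin n) (t : ℕ), r k = (t : ℕ∞) → ∀ _ht : (k : ℕ) + 1 ≤ t,
    r ⟨n + (k : ℕ) - t, by have := k.isLt; omega⟩ = ⊤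

/-- Entries lie in `{0, …, n-1} ∪ {∞}`. -/
def entriesB (n : ℕ) (r : Fin n → ℕ∞) : Prop :=
  ∀ k, r k = ⊤ ∨ r k ≤ ((n - 1 : ℕ) : ℕ∞)

/-- A type `B_n` bracket vector. -/
def isBVec (n : ℕ) (r : Fin n → ℕ∞) : Prop :=
  entriesB n r ∧ condIB n r ∧ condIIB n r

/-- The relation `~_S` on type `B_n` bracket vectors: `V ~ W` iff `V = W` or
they agree in all coordinates except one coordinate `k ∈ S`, where one has the
value `n - 1` and the other has `∞`.  (Here `S` is recorded as a set of
0-based indices `k`, corresponding to `i = k + 1 ∈ {1,…,n}`.) -/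
def simBD (n : ℕ) (Sset : Set (Fin n)) (V W : Fin n → ℕ∞) : Prop :=
  V = W ∨ ∃ k ∈ Sset, (∀ j : Fin n, j ≠ k → V j = W j) ∧
    ((V k = ((n - 1 : ℕ) : ℕ∞) ∧ W k = ⊤) ∨ (V k = ⊤ ∧ W k = ((n - 1 : ℕ) : ℕ∞)))

/-- Membership in `T_n^S`: no coordinate indexed by `S` equals `n - 1`. -/
def inTS (n : ℕ) (Sset : Set (Fin n)) (r : Fin n → ℕ∞) : Prop :=
  ∀ k ∈ Sset, r k ≠ ((n - 1 : ℕ) : ℕ∞)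

section helpers

open Classical

/-- at most one coordinate equals n-1 -/
lemma enat_exists {x : ℕ∞} (h : x ≠ ⊤) : ∃ a : ℕ, x = ((a : ℕ) : ℕ∞) := by
  lift x to ℕ using h with a
  exact ⟨a, rfl⟩

lemma nm1_lemma {n : ℕ} {V : Fin n → ℕ∞} (hV : isBVec n V) {i j : Fin n}
    (hij : i < j) (hi : V i = ((n - 1 : ℕ) : ℕ∞)) : ¬ V j = ((n - 1 : ℕ) : ℕ∞) := by
  intro hj
  have hd : (((j : ℕ) - (i : ℕ) : ℕ) : ℕ∞) ≤ V j := by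
    rw [hj]; exact Nat.cast_le.mpr (by have := j.isLt; omega)
  have := hV.2.1 i j hij hd
  rw [hi, hj, ← Nat.cast_add, Nat.cast_le] at this
  have hij' : (i : ℕ) < (j : ℕ) := hij
  have := j.isLt
  omega

lemma atMostOne {n : ℕ} {V : Fin n → ℕ∞} (hV : isBVec n V) {i j : Fin n}
    (hi : V i = ((n - 1 : ℕ) : ℕ∞)) (hj : V j = ((n - 1 : ℕ) : ℕ∞)) : i = j := by
  rcases lt_trichotomy i j with h | h | h
  · exact absurd hj (nm1_lemma hV h hi)
  · exact h
  · exact absurd hi (nm1_lemma hV h hj)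

/-- the projection raising the (unique) S-coordinate with value n-1 to ⊤ -/
noncomputable def piS (n : ℕ) (Sset : Set (Fin n)) (V : Fin n → ℕ∞) : Fin n → ℕ∞ :=
  fun j => if V j = ((n - 1 : ℕ) : ℕ∞) ∧ j ∈ Sset then ⊤ else V j

lemma le_piS {n Sset} (V : Fin n → ℕ∞) : V ≤ piS n Sset V := by
  intro j; unfold piS; split <;> simp

lemma piS_isBVec {n Sset} {V : Fin n → ℕ∞} (hV : isBVec n V) : isBVec n (piS n Sset V) := by
  obtain ⟨hE, hI, hII⟩ := hV
  refine ⟨fun k => ?_, fun i j hij hd => ?_, fun k t hk ht => ?_⟩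
  · unfold piS; split
    · exact Or.inl rfl
    · exact hE k
  · have hj2 : piS n Sset V j = ⊤ ∨ piS n Sset V j = V j := by
      unfold piS; split
      · exact Or.inl rfl
      · exact Or.inr rfl
    rcases hj2 with hj2 | hj2
    · rw [hj2]; exact le_top
    · rw [hj2] at hd ⊢
      have hIJ := hI i j hij hd
      have hi2 : (piS n Sset V i = ⊤ ∧ V i = ((n - 1 : ℕ) : ℕ∞)) ∨ piS n Sset V i = V i := by
        unfold piS; split
        · rename_i hc; exact Or.inl ⟨rfl, hc.1⟩
        · exact Or.inr rfl
      rcases hi2 with ⟨hi2, hi3⟩ | hi2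
      · rcases hE j with hj3 | hj3
        · rw [hi2, hj3, top_add]
        · exfalso
          rw [hi3] at hIJ
          have hle := le_trans hIJ hj3
          rw [← Nat.cast_add, Nat.cast_le] at hle
          have hij' : (i : ℕ) < (j : ℕ) := hij
          omega
      · rw [hi2]; exact hIJ
  · unfold piS at hk ⊢
    split at hk
    · exact absurd hk (by simp)
    · have := hII k t hk ht
      split
      · rfl
      · exact this

lemma piS_inTS {n Sset} {V : Fin n → ℕ∞} : inTS n Sset (piS n Sset V) := by
  intro k hk
  unfold piS; split
  · exact (ENat.coe_ne_top (n-1)).symm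
  · rename_i hc
    exact fun h => hc ⟨h, hk⟩

lemma piS_eq_of_inTS {n Sset} {V : Fin n → ℕ∞} (h : inTS n Sset V) : piS n Sset V = V := by
  funext j
  unfold piS
  rw [if_neg]
  rintro ⟨h1, h2⟩
  exact h j h2 h1

lemma piS_simBD {n Sset} {V : Fin n → ℕ∞} (hV : isBVec n V) : simBD n Sset V (piS n Sset V) := by
  by_cases hex : ∃ k ∈ Sset, V k = ((n - 1 : ℕ) : ℕ∞)
  · obtain ⟨k, hkS, hk⟩ := hex
    refine Or.inr ⟨k, hkS, fun j hj => ?_, Or.inl ⟨hk, ?_⟩⟩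
    · unfold piS
      rw [if_neg]
      rintro ⟨h1, _⟩
      exact hj (atMostOne hV h1 hk)
    · unfold piS; rw [if_pos ⟨hk, hkS⟩]
  · refine Or.inl (funext fun j => ?_).symm
    unfold piS
    rw [if_neg]
    rintro ⟨h1, h2⟩
    exact hex ⟨j, h2, h1⟩

lemma piS_mono {n Sset} {V W : Fin n → ℕ∞} (hW : entriesB n W) (h : V ≤ W) :
    piS n Sset V ≤ piS n Sset W := by
  intro j
  unfold piS
  split
  · rename_i hc
    rw [show (⊤ : ℕ∞) ≤ _ ↔ _ = ⊤ from top_le_iff]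
    have h1 : ((n - 1 : ℕ) : ℕ∞) ≤ W j := hc.1 ▸ h j
    split
    · rfl
    · rename_i hcn
      rcases hW j with hj | hj
      · exact hj
      · exact absurd ⟨le_antisymm hj h1, hc.2⟩ hcn
  · exact le_trans (h j) (le_piS W j)

lemma piS_max {n Sset} {V U : Fin n → ℕ∞} (hs : simBD n Sset V U) :
    U ≤ piS n Sset V := by
  rcases hs with rfl | ⟨k, hkS, hagree, hflip⟩
  · exact le_piS V
  · intro j
    by_cases hj : j = k
    · subst hj
      rcases hflip with ⟨h1, _⟩ | ⟨h1, h2⟩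
      · unfold piS; rw [if_pos ⟨h1, hkS⟩]; exact le_top
      · calc U j ≤ V j := by rw [h1]; exact le_top
          _ ≤ piS n Sset V j := le_piS V j
    · rw [← hagree j hj]
      exact le_piS V j

/-- an element of T_S dominates anything sim-related to it -/
lemma simBD_le {n Sset} {V V' : Fin n → ℕ∞} (hV : inTS n Sset V)
    (hs : simBD n Sset V V') : V' ≤ V := by
  rcases hs with rfl | ⟨k, hkS, hagree, hflip⟩
  · exact le_refl V
  · intro j
    by_cases hj : j = k
    · subst hj
      rcases hflip with ⟨h1, _⟩ | ⟨h1, _⟩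
      · exact absurd h1 (hV j hkS)
      · rw [h1]; exact le_top
    · rw [hagree j hj]

/-- repair step -/
lemma repair {n : ℕ} {g : Fin n → ℕ∞} (hE : entriesB n g) (hI : condIB n g)
    (k : Fin n) (t : ℕ) (hk : g k = (t : ℕ∞)) (hkt : (k : ℕ) + 1 ≤ t)
    (idx : Fin n) (hidx : (idx : ℕ) = n + (k : ℕ) - t) (hviol : g idx ≠ ⊤) :
    ∃ g', entriesB n g' ∧ condIB n g' ∧ g' ≤ g ∧
      (∑ i, (g' i).toNat) < (∑ i, (g i).toNat) ∧
      ∀ h, isBVec n h → h ≤ g → h ≤ g' := by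
  classical
  have ht1 : 1 ≤ t := by omega
  have htn : t ≤ n - 1 := by
    rcases hE k with h | h
    · exact absurd (hk ▸ h) (ENat.coe_ne_top t)
    · exact Nat.cast_le.mp (hk ▸ h)
  have hn1 : 1 ≤ n := by have := k.isLt; omega
  set low : Fin n → Prop :=
    fun i => (i : ℕ) ≤ (k : ℕ) ∧ (k : ℕ) - (i : ℕ) < t ∧
      g i = ((t - ((k : ℕ) - (i : ℕ)) : ℕ) : ℕ∞) with hlowdef
  set g' : Fin n → ℕ∞ :=
    fun i => if low i then ((t - ((k : ℕ) - (i : ℕ)) - 1 : ℕ) : ℕ∞) else g i with hg'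
  have hg'pos : ∀ i, low i → g' i = ((t - ((k : ℕ) - (i : ℕ)) - 1 : ℕ) : ℕ∞) :=
    fun i hi => by simp only [hg', if_pos hi]
  have hg'neg : ∀ i, ¬ low i → g' i = g i := fun i hi => by simp only [hg', if_neg hi]
  have hlowk : low k := by
    refine ⟨le_refl _, by omega, ?_⟩
    rw [Nat.sub_self, Nat.sub_zero]
    exact hk
  have hgval : ∀ i, low i → g i = ((t - ((k : ℕ) - (i : ℕ)) : ℕ) : ℕ∞) := fun i hi => hi.2.2
  have hle : g' ≤ g := by
    intro i
    by_cases hi : low i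
    · rw [hg'pos i hi, hgval i hi]
      exact Nat.cast_le.mpr (by omega)
    · rw [hg'neg i hi]
  refine ⟨g', ?_, ?_, hle, ?_, ?_⟩
  · -- entries
    intro i
    by_cases hi : low i
    · right
      rw [hg'pos i hi]
      exact Nat.cast_le.mpr (by omega)
    · rw [hg'neg i hi]; exact hE i
  · -- condI
    intro i j hij hd
    have hij' : (i : ℕ) < (j : ℕ) := hij
    by_cases hlj : low j
    · rw [hg'pos j hlj] at hd ⊢
      obtain ⟨hjk, hjt, hgj⟩ := hlj
      have hd' : (j : ℕ) - (i : ℕ) ≤ t - ((k : ℕ) - (j : ℕ)) - 1 := Nat.cast_le.mp hd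
      have hdg : (((j : ℕ) - (i : ℕ) : ℕ) : ℕ∞) ≤ g j := by
        rw [hgj]; exact Nat.cast_le.mpr (by omega)
      have hIJ := hI i j hij hdg
      rw [hgj] at hIJ
      have hne : g i ≠ ⊤ := by
        intro h
        rw [h, top_add] at hIJ
        exact (ENat.coe_ne_top _) (top_le_iff.mp hIJ)
      obtain ⟨a, ha⟩ := enat_exists hne
      rw [ha, ← Nat.cast_add, Nat.cast_le] at hIJ
      by_cases hli : low i
      · rw [hg'pos i hli, ← Nat.cast_add, Nat.cast_le]
        obtain ⟨hik, hit, _⟩ := hli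
        omega
      · rw [hg'neg i hli, ha, ← Nat.cast_add, Nat.cast_le]
        have hik : (i : ℕ) ≤ (k : ℕ) := by omega
        have hit : (k : ℕ) - (i : ℕ) < t := by omega
        have hane : a ≠ t - ((k : ℕ) - (i : ℕ)) := by
          intro h
          exact hli ⟨hik, hit, by rw [ha, h]⟩
        omega
    · rw [hg'neg j hlj] at hd ⊢
      have hIJ := hI i j hij hd
      by_cases hli : low i
      · exact le_trans (add_le_add (hle i) le_rfl) hIJ
      · rw [hg'neg i hli]; exact hIJ
  · -- weight decreases
    apply Finset.sum_lt_sum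
    · intro i _
      by_cases hi : low i
      · rw [hg'pos i hi, hgval i hi, ENat.toNat_coe, ENat.toNat_coe]
        omega
      · rw [hg'neg i hi]
    · refine ⟨k, Finset.mem_univ k, ?_⟩
      rw [hg'pos k hlowk, hk, Nat.sub_self, Nat.sub_zero, ENat.toNat_coe, ENat.toNat_coe]
      omega
  · -- lower bounds preserved
    intro h hh hhle i
    by_cases hli : low i
    · have hgi : g i = ((t - ((k : ℕ) - (i : ℕ)) : ℕ) : ℕ∞) := hgval i hli
      rw [hg'pos i hli]
      have hhi : h i ≤ ((t - ((k : ℕ) - (i : ℕ)) : ℕ) : ℕ∞) := hgi ▸ hhle i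
      have hne : h i ≠ ⊤ := (hhi.trans_lt (WithTop.coe_lt_top _)).ne
      obtain ⟨a, ha⟩ := enat_exists hne
      rw [ha, Nat.cast_le] at hhi
      rw [ha, Nat.cast_le]
      rcases Nat.lt_or_ge a (t - ((k : ℕ) - (i : ℕ))) with hlt | hge
      · omega
      · exfalso
        have hsi : (i : ℕ) + 1 ≤ a := by
          obtain ⟨hik, hit, _⟩ := hli
          omega
        have hII := hh.2.2 i a ha hsi
        have hidx2 : (⟨n + (i : ℕ) - a, by have := i.isLt; omega⟩ : Fin n) = idx := by
          apply Fin.ext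
          simp only [hidx]
          obtain ⟨hik, hit, _⟩ := hli
          omega
        rw [hidx2] at hII
        have : (⊤ : ℕ∞) ≤ g idx := hII ▸ hhle idx
        exact hviol (top_le_iff.mp this)
    · rw [hg'neg i hli]; exact hhle i

/-- greatest bracket vector below any entries+condI vector -/
lemma GFPaux (n N : ℕ) : ∀ g : Fin n → ℕ∞, (∑ i, (g i).toNat) < N →
    entriesB n g → condIB n g →
    ∃ m, isBVec n m ∧ m ≤ g ∧ ∀ h, isBVec n h → h ≤ g → h ≤ m := by
  induction N with
  | zero => intro g hw; exact absurd hw (Nat.not_lt_zero _)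
  | succ N ih =>
    intro g hw hE hI
    by_cases hII : condIIB n g
    · exact ⟨g, ⟨hE, hI, hII⟩, le_refl g, fun h _ hle => hle⟩
    · simp only [condIIB, not_forall] at hII
      obtain ⟨k, t, hk, hkt, hviol⟩ := hII
      obtain ⟨g', hE', hI', hle', hw', hmax'⟩ :=
        repair hE hI k t hk hkt _ rfl hviol
      obtain ⟨m, hm, hmle, hmax⟩ := ih g' (by omega) hE' hI'
      exact ⟨m, hm, hmle.trans hle', fun h hh hle => hmax h hh (hmax' h hh hle)⟩

lemma minEntries {n : ℕ} {V W : Fin n → ℕ∞} (hV : entriesB n V) (hW : entriesB n W) :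
    entriesB n (fun i => min (V i) (W i)) := by
  intro k
  rcases le_total (V k) (W k) with h | h
  · simpa [min_eq_left h] using hV k
  · simpa [min_eq_right h] using hW k

lemma minCondI {n : ℕ} {V W : Fin n → ℕ∞} (hV : condIB n V) (hW : condIB n W) :
    condIB n (fun i => min (V i) (W i)) := by
  intro i j hij hd
  simp only [le_min_iff] at hd ⊢
  exact ⟨le_trans (add_le_add (min_le_left _ _) le_rfl) (hV i j hij hd.1),
    le_trans (add_le_add (min_le_right _ _) le_rfl) (hW i j hij hd.2)⟩

/-- meets in T_S -/
lemma meetTS {n : ℕ} {Sset : Set (Fin n)} {V W : Fin n → ℕ∞}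
    (hV : isBVec n V) (hW : isBVec n W) (hVS : inTS n Sset V) (hWS : inTS n Sset W) :
    ∃ m, isBVec n m ∧ inTS n Sset m ∧ m ≤ V ∧ m ≤ W ∧
      ∀ h, isBVec n h → inTS n Sset h → h ≤ V → h ≤ W → h ≤ m := by
  set g : Fin n → ℕ∞ := fun i => min (V i) (W i) with hg
  have hE : entriesB n g := minEntries hV.1 hW.1
  have hI : condIB n g := minCondI hV.2.1 hW.2.1
  obtain ⟨m0, hm0, hm0le, hm0max⟩ :=
    GFPaux n ((∑ i, (g i).toNat) + 1) g (Nat.lt_succ_self _) hE hI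
  have hm0V : m0 ≤ V := fun i => (hm0le i).trans (min_le_left _ _)
  have hm0W : m0 ≤ W := fun i => (hm0le i).trans (min_le_right _ _)
  refine ⟨piS n Sset m0, piS_isBVec hm0, piS_inTS, ?_, ?_, ?_⟩
  · calc piS n Sset m0 ≤ piS n Sset V := piS_mono hV.1 hm0V
      _ = V := piS_eq_of_inTS hVS
  · calc piS n Sset m0 ≤ piS n Sset W := piS_mono hW.1 hm0W
      _ = W := piS_eq_of_inTS hWS
  · intro h hh _ hhV hhW
    have : h ≤ g := fun i => le_min (hhV i) (hhW i)
    exact le_trans (hm0max h hh this) (le_piS m0)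

lemma entriesFinite (n : ℕ) : {r : Fin n → ℕ∞ | entriesB n r}.Finite := by
  have hfin : ∀ i : Fin n, (insert (⊤ : ℕ∞) ((fun m : ℕ => (m : ℕ∞)) '' Set.Iic (n - 1))).Finite :=
    fun _ => ((Set.finite_Iic (n - 1)).image _).insert ⊤
  apply Set.Finite.subset (Set.Finite.pi hfin)
  intro r hr
  rw [Set.mem_pi]
  intro i _
  rcases hr i with h | h
  · exact Set.mem_insert_iff.mpr (Or.inl h)
  · lift r i to ℕ using (h.trans_lt (WithTop.coe_lt_top (n-1))).ne with m hm
    exact Set.mem_insert_iff.mpr (Or.inr ⟨m, Nat.cast_le.mp h, rfl⟩)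

lemma topBVec (n : ℕ) (Sset : Set (Fin n)) :
    isBVec n (fun _ => (⊤ : ℕ∞)) ∧ inTS n Sset (fun _ => (⊤ : ℕ∞)) := by
  refine ⟨⟨fun k => Or.inl rfl, fun i j _ _ => le_top, fun k t hk _ => ?_⟩, fun k _ => ?_⟩
  · exact absurd hk (ENat.coe_ne_top t).symm
  · exact (ENat.coe_ne_top (n-1)).symm

end helpers

/-- Every equivalence class of the congruence `~_S` on the type `B_n` Tamari
lattice contains exactly one element of `T_n^S`, which is the maximum of its
class; consequently, for elements of `T_n^S`, the quotient order (some
representatives are comparable) coincides with the order induced by inclusion,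
and `T_n^S` is a lattice with respect to this order. -/
theorem TS_quotient_lattice (n : ℕ) (Sset : Set (Fin n)) :
    (∀ V : Fin n → ℕ∞, isBVec n V →
      ∃! W : Fin n → ℕ∞, isBVec n W ∧ simBD n Sset V W ∧ inTS n Sset W ∧
        ∀ U : Fin n → ℕ∞, isBVec n U → simBD n Sset V U → U ≤ W) ∧
    (∀ V W : Fin n → ℕ∞, isBVec n V → isBVec n W →
      inTS n Sset V → inTS n Sset W →
      (V ≤ W ↔ ∃ V' W' : Fin n → ℕ∞, isBVec n V' ∧ isBVec n W' ∧
        simBD n Sset V V' ∧ simBD n Sset W W' ∧ V' ≤ W')) ∧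
    (∀ V W : Fin n → ℕ∞, isBVec n V → isBVec n W →
      inTS n Sset V → inTS n Sset W →
      (∃ m : Fin n → ℕ∞, isBVec n m ∧ inTS n Sset m ∧ m ≤ V ∧ m ≤ W ∧
        ∀ h : Fin n → ℕ∞, isBVec n h → inTS n Sset h → h ≤ V → h ≤ W → h ≤ m) ∧
      (∃ j : Fin n → ℕ∞, isBVec n j ∧ inTS n Sset j ∧ V ≤ j ∧ W ≤ j ∧
        ∀ h : Fin n → ℕ∞, isBVec n h → inTS n Sset h → V ≤ h → W ≤ h → j ≤ h)) := by
  refine ⟨?_, ?_, ?_⟩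
  · -- Part 1
    intro V hV
    refine ⟨piS n Sset V, ⟨piS_isBVec hV, piS_simBD hV, piS_inTS,
      fun U _ hs => piS_max hs⟩, ?_⟩
    rintro y ⟨hy, hsy, hyS, hymax⟩
    exact le_antisymm (piS_max hsy) (hymax _ (piS_isBVec hV) (piS_simBD hV))
  · -- Part 2
    intro V W hV hW hVS hWS
    constructor
    · intro h
      exact ⟨V, W, hV, hW, Or.inl rfl, Or.inl rfl, h⟩
    · rintro ⟨V', W', hV', hW', hsV, hsW, hle⟩
      have hW'le : W' ≤ W := simBD_le hWS hsW
      rcases hsV with rfl | ⟨k, hkS, hagree, hflip⟩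
      · exact hle.trans hW'le
      · intro j
        by_cases hj : j = k
        · subst hj
          rcases hflip with ⟨h1, _⟩ | ⟨h1, h2⟩
          · exact absurd h1 (hVS j hkS)
          · rw [h1]
            have h3 : ((n - 1 : ℕ) : ℕ∞) ≤ W j :=
              calc ((n - 1 : ℕ) : ℕ∞) = V' j := h2.symm
                _ ≤ W' j := hle j
                _ ≤ W j := hW'le j
            rcases hW.1 j with h4 | h4
            · exact h4.ge
            · exact absurd (le_antisymm h4 h3) (hWS j hkS)
        · rw [hagree j hj]
          exact (hle j).trans (hW'le j)
  · -- Part 3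
    intro V W hV hW hVS hWS
    refine ⟨meetTS hV hW hVS hWS, ?_⟩
    classical
    set U : Set (Fin n → ℕ∞) :=
      {u | isBVec n u ∧ inTS n Sset u ∧ V ≤ u ∧ W ≤ u} with hU
    have hUfin : U.Finite := (entriesFinite n).subset (fun u hu => hu.1.1)
    have hUne : U.Nonempty :=
      ⟨fun _ => ⊤, (topBVec n Sset).1, (topBVec n Sset).2,
        fun _ => le_top, fun _ => le_top⟩
    obtain ⟨j0, hj0mem, hj0min⟩ := hUfin.toFinset.exists_minimal
      (by rwa [Set.Finite.toFinset_nonempty])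
    rw [Set.Finite.mem_toFinset] at hj0mem
    obtain ⟨hj0B, hj0S, hj0V, hj0W⟩ := hj0mem
    refine ⟨j0, hj0B, hj0S, hj0V, hj0W, ?_⟩
    intro u huB huS huV huW
    obtain ⟨c, hcB, hcS, hcj0, hcu, hcmax⟩ := meetTS hj0B huB hj0S huS
    have hVc : V ≤ c := hcmax V hV hVS hj0V huV
    have hWc : W ≤ c := hcmax W hW hWS hj0W huW
    have hcU : c ∈ hUfin.toFinset := by
      rw [Set.Finite.mem_toFinset]
      exact ⟨hcB, hcS, hVc, hWc⟩
    have := hj0min hcU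
    have hceq : c = j0 := by
      by_contra hne
      exact hne (le_antisymm hcj0 (this hcj0))
    rw [← hceq]
    exact hcu
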